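/- Let V ≥ 1 be an integer, let a > 0, and let λ₁,…,λ_V be nonnegative reals with Σ_{v=1}^V λ_v² ≤ a. Define λ̃_v = max{λ_v/a^{1/2}, V^{−1/2}} for v ∈ [V]. Then 3V²/4 ≤ Σ_{v=1}^V λ̃_v^{−2} ≤ V². -/

import Mathlib

open scoped BigOperators

/-- Let `V ≥ 1`, `a > 0`, and nonnegative reals `λ₁,…,λ_V` with `∑ λ_v² ≤ a`.
With `λ̃_v = max (λ_v / √a) (V^{-1/2})`, we have `3V²/4 ≤ ∑ λ̃_v⁻² ≤ V²`. -/
theorem stmt_15 (V : ℕ) (hV : 1 ≤ V) (a : ℝ) (ha : 0 < a) (lam : Fin V → ℝ)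
    (hnn : ∀ v, 0 ≤ lam v) (hsum : ∑ v, (lam v) ^ 2 ≤ a) :
    3 * (V : ℝ) ^ 2 / 4 ≤ ∑ v, ((max (lam v / Real.sqrt a) ((Real.sqrt (V : ℝ))⁻¹)) ^ 2)⁻¹ ∧
      ∑ v, ((max (lam v / Real.sqrt a) ((Real.sqrt (V : ℝ))⁻¹)) ^ 2)⁻¹ ≤ (V : ℝ) ^ 2 := by
  have hVpos : (0 : ℝ) < V := by exact_mod_cast hV
  have hsa : 0 < Real.sqrt a := Real.sqrt_pos.2 ha
  have hsV : 0 < Real.sqrt V := Real.sqrt_pos.2 hVpos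
  set t : Fin V → ℝ := fun v => ((max (lam v / Real.sqrt a) ((Real.sqrt (V : ℝ))⁻¹)) ^ 2)⁻¹
    with ht
  have htle : ∀ v, t v ≤ (V : ℝ) := by
    intro v
    have h1 : (Real.sqrt (V : ℝ))⁻¹ ≤ max (lam v / Real.sqrt a) ((Real.sqrt (V : ℝ))⁻¹) :=
      le_max_right _ _
    have h2 : ((Real.sqrt (V : ℝ))⁻¹) ^ 2 ≤
        (max (lam v / Real.sqrt a) ((Real.sqrt (V : ℝ))⁻¹)) ^ 2 :=
      pow_le_pow_left₀ (by positivity) h1 2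
    have h3 : t v ≤ (((Real.sqrt (V : ℝ))⁻¹) ^ 2)⁻¹ :=
      inv_anti₀ (by positivity) h2
    have h4 : (((Real.sqrt (V : ℝ))⁻¹) ^ 2)⁻¹ = (V : ℝ) := by
      rw [inv_pow, inv_inv, Real.sq_sqrt hVpos.le]
    rwa [h4] at h3
  have htnn : ∀ v, 0 ≤ t v := fun v => by positivity
  constructor
  · -- lower bound
    set S : Finset (Fin V) :=
      Finset.univ.filter (fun v => (Real.sqrt (V : ℝ))⁻¹ < lam v / Real.sqrt a) with hS
    have hlampos : ∀ v ∈ S, 0 < lam v := by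
      intro v hv
      rw [hS, Finset.mem_filter] at hv
      have h0 : 0 < lam v / Real.sqrt a := lt_trans (inv_pos.2 hsV) hv.2
      have := (div_pos_iff.mp h0)
      rcases this with ⟨h1, _⟩ | ⟨_, h2⟩
      · exact h1
      · exact absurd h2 (not_lt.mpr hsa.le)
    have htS : ∀ v ∈ S, t v = a / (lam v) ^ 2 := by
      intro v hv
      rw [hS, Finset.mem_filter] at hv
      have hmax : max (lam v / Real.sqrt a) ((Real.sqrt (V : ℝ))⁻¹) = lam v / Real.sqrt a :=
        max_eq_left hv.2.le
      rw [ht]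
      simp only [hmax, div_pow, Real.sq_sqrt ha.le]
      rw [inv_div]
    have htSc : ∀ v ∈ Finset.univ.filter
        (fun v => ¬ ((Real.sqrt (V : ℝ))⁻¹ < lam v / Real.sqrt a)), t v = (V : ℝ) := by
      intro v hv
      rw [Finset.mem_filter] at hv
      have hmax : max (lam v / Real.sqrt a) ((Real.sqrt (V : ℝ))⁻¹) = (Real.sqrt (V : ℝ))⁻¹ :=
        max_eq_right (not_lt.mp hv.2)
      rw [ht]
      simp only [hmax]
      rw [inv_pow, inv_inv, Real.sq_sqrt hVpos.le]
    -- Cauchy–Schwarz on S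
    have hCS : ((S.card : ℝ)) ^ 2 ≤ (∑ v ∈ S, (lam v) ^ 2 / a) * (∑ v ∈ S, t v) := by
      have := Finset.sum_mul_sq_le_sq_mul_sq S (fun v => lam v / Real.sqrt a)
        (fun v => Real.sqrt a / lam v)
      have heq : ∑ v ∈ S, (lam v / Real.sqrt a) * (Real.sqrt a / lam v) = (S.card : ℝ) := by
        rw [Finset.sum_congr rfl (fun v hv => ?_), Finset.sum_const, nsmul_eq_mul, mul_one]
        field_simp [(hlampos v hv).ne', hsa.ne']
      have heq2 : ∀ v ∈ S, (lam v / Real.sqrt a) ^ 2 = (lam v) ^ 2 / a := by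
        intro v hv
        rw [div_pow, Real.sq_sqrt ha.le]
      have heq3 : ∀ v ∈ S, (Real.sqrt a / lam v) ^ 2 = t v := by
        intro v hv
        rw [div_pow, Real.sq_sqrt ha.le, htS v hv]
      rw [heq, Finset.sum_congr rfl heq2, Finset.sum_congr rfl heq3] at this
      exact this
    have hfrac : ∑ v ∈ S, (lam v) ^ 2 / a ≤ 1 := by
      rw [← Finset.sum_div]
      rw [div_le_one ha]
      calc ∑ v ∈ S, (lam v) ^ 2 ≤ ∑ v, (lam v) ^ 2 :=
            Finset.sum_le_sum_of_subset_of_nonneg (Finset.subset_univ S)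
              (fun v _ _ => by positivity)
        _ ≤ a := hsum
    have hSsum_nn : 0 ≤ ∑ v ∈ S, t v := Finset.sum_nonneg (fun v _ => htnn v)
    have hCS2 : ((S.card : ℝ)) ^ 2 ≤ ∑ v ∈ S, t v := by
      calc ((S.card : ℝ)) ^ 2 ≤ (∑ v ∈ S, (lam v) ^ 2 / a) * (∑ v ∈ S, t v) := hCS
        _ ≤ 1 * (∑ v ∈ S, t v) := mul_le_mul_of_nonneg_right hfrac hSsum_nn
        _ = ∑ v ∈ S, t v := one_mul _
    have hsplit : ∑ v, t v = ∑ v ∈ S, t v +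
        ∑ v ∈ Finset.univ.filter
          (fun v => ¬ ((Real.sqrt (V : ℝ))⁻¹ < lam v / Real.sqrt a)), t v := by
      rw [hS]
      exact (Finset.sum_filter_add_sum_filter_not _ _ _).symm
    have hcSc : ∑ v ∈ Finset.univ.filter
        (fun v => ¬ ((Real.sqrt (V : ℝ))⁻¹ < lam v / Real.sqrt a)), t v =
        ((Finset.univ.filter
          (fun v => ¬ ((Real.sqrt (V : ℝ))⁻¹ < lam v / Real.sqrt a))).card : ℝ) * V := by
      rw [Finset.sum_congr rfl htSc, Finset.sum_const, nsmul_eq_mul]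
    have hcard : S.card + (Finset.univ.filter
        (fun v => ¬ ((Real.sqrt (V : ℝ))⁻¹ < lam v / Real.sqrt a))).card = V := by
      rw [hS]
      rw [Finset.card_filter_add_card_filter_not]
      simp
    set s : ℝ := (S.card : ℝ)
    set c : ℝ := ((Finset.univ.filter
      (fun v => ¬ ((Real.sqrt (V : ℝ))⁻¹ < lam v / Real.sqrt a))).card : ℝ)
    have hsc : s + c = (V : ℝ) := by
      unfold s c
      exact_mod_cast hcard
    have : s ^ 2 + c * V ≤ ∑ v, t v := by
      rw [hsplit, hcSc]
      exact add_le_add_left hCS2 _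
    have hfinal : 3 * (V : ℝ) ^ 2 / 4 ≤ s ^ 2 + c * (V : ℝ) := by
      rw [← hsc]
      nlinarith [sq_nonneg (s - c)]
    exact le_trans hfinal this
  · -- upper bound
    calc ∑ v, t v ≤ ∑ _v : Fin V, (V : ℝ) := Finset.sum_le_sum (fun v _ => htle v)
      _ = (V : ℝ) ^ 2 := by simp [sq]
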